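/- Property D1 holds for the proof structure of any type of L*(\,!): for the linear order < and reachability relation O* defined on the vertices, if a ≤ b ≤ c, a O* d and c O* d, then b O* d (i.e., the set of vertices below any fixed vertex d forms an interval in the order <). -/

import Mathlib

/-- Types of the calculus L*(\,!): primitive types, left division, and the modality `!`. -/
inductive Tp : Type
  | pr : ℕ → Tp
  | div : Tp → Tp → Tp   -- `div A B` is the left division  A \ B
  | bang : Tp → Tp        -- `bang A` is  !A

namespace Tp

/-! ### The proof structure of a type

Vertices of the tree associated to a type are represented by their paths from the
root `[]`; at a vertex of the form `div A B`, step `0` goes into the subtree of `A`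
(arc labelled `-1`) and step `1` goes into the subtree of `B` (arc labelled `1`);
at a vertex of the form `bang A`, step `0` goes into the subtree of `A`
(arc labelled `2`).  Arcs are directed towards the root, so the parent of a vertex
`b ++ [k]` is `b`, and `a O* b` means that `b` is a prefix of `a`. -/

/-- `isVertex T p` : the path `p` is a vertex of the tree of the type `T`. -/
def isVertex : Tp → List ℕ → Prop
  | _, [] => True
  | bang A, 0 :: p => isVertex A p
  | div A _, 0 :: p => isVertex A p
  | div _ B, 1 :: p => isVertex B p
  | _, _ => False

/-- The subtype of `T` located at the vertex `p` (junk value off vertices). -/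
def subAt : Tp → List ℕ → Tp
  | A, [] => A
  | bang A, 0 :: p => subAt A p
  | div A _, 0 :: p => subAt A p
  | div _ B, 1 :: p => subAt B p
  | A, _ => A

/-- `d a`: the number of arcs labelled `-1` on the path from the vertex `a` to the root. -/
def dpth : Tp → List ℕ → ℕ
  | div A _, 0 :: p => dpth A p + 1
  | div _ B, 1 :: p => dpth B p
  | bang A, 0 :: p => dpth A p
  | _, _ => 0

/-- The path from (the root of the tree of) a type down to the unique leaf reachable
without using arcs labelled `-1`. -/
def hext : Tp → List ℕ
  | pr _ => []
  | bang A => 0 :: hext A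
  | div _ B => 1 :: hext B

/-- `H T a`: the unique leaf from which a path without `-1`-labelled arcs leads to `a`. -/
def H (T : Tp) (a : List ℕ) : List ℕ := a ++ hext (subAt T a)

/-- The strict linear order `<` on the vertices of the tree of a type:
for a primitive type it is trivial; for `!A` the new root is the minimum;
for `A \ B` it is the sum of the reversed order of `A`'s tree, the new root,
and the order of `B`'s tree. -/
def lt : Tp → List ℕ → List ℕ → Prop
  | bang A, 0 :: p, 0 :: q => lt A p q
  | bang _, [], _ :: _ => True
  | div A _, 0 :: p, 0 :: q => lt A q p
  | div _ _, 0 :: _, [] => True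
  | div _ _, 0 :: _, 1 :: _ => True
  | div _ _, [], 1 :: _ => True
  | div _ B, 1 :: p, 1 :: q => lt B p q
  | _, _, _ => False

/-- The reflexive closure `≤` of the order `<`. -/
def le (T : Tp) (a b : List ℕ) : Prop := lt T a b ∨ a = b

/-- `isLeaf T a`: the vertex `a` is a leaf of the tree of `T`. -/
def isLeaf (T : Tp) (a : List ℕ) : Prop := isVertex T a ∧ ∃ i, subAt T a = pr i

/-- The label (index of the primitive type) of a leaf (junk value off leaves). -/
def labelNat (T : Tp) (a : List ℕ) : ℕ :=
  match subAt T a with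
  | pr i => i
  | _ => 0

/-- `Orel T a b`: `b` is the parent of `a` (the arc from `a` points to `b`). -/
def Orel (T : Tp) (a b : List ℕ) : Prop := isVertex T a ∧ ∃ k, a = b ++ [k]

/-- The label in `{-1, 1, 2}` of the arc from the child `b ++ [k]` to its parent `b`
(junk value `0` if `b` is a leaf). -/
def arcLab (T : Tp) (b : List ℕ) (k : ℕ) : ℤ :=
  match subAt T b with
  | div _ _ => if k = 0 then -1 else 1
  | bang _ => 2
  | pr _ => 0

end Tp

/-- The type whose proof structure is, by definition, the proof structure of the
sequent `A₁ … Aₙ → B`, namely `Aₙ \ (Aₙ₋₁ \ ⋯ \ (A₁ \ B) ⋯)`. -/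
def seqType (Γ : List Tp) (B : Tp) : Tp := Γ.foldl (fun C A => Tp.div A C) B

/-- A proof net for the sequent whose proof structure is the tree of the type `T`:
a set `U` of vertices and a binary relation `S` on leaves satisfying PN1–PN11. -/
structure ProofNet (T : Tp) where
  U : List ℕ → Prop
  S : List ℕ → List ℕ → Prop
  U_sub : ∀ a, U a → T.isVertex a
  S_sub : ∀ a b, S a b → T.isLeaf a ∧ T.isLeaf b
  /-- PN1: `S` is symmetric. -/
  pn1 : ∀ a b, S a b → S b a
  /-- PN2: `S` is functional. -/
  pn2 : ∀ a b c, S a b → S a c → b = c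
  /-- PN3: `S` is planar. -/
  pn3 : ∀ a b c d, S a b → S c d → T.lt a c → T.lt c b → T.lt a d ∧ T.lt d b
  /-- PN4: `S`-linked leaves carry equal labels. -/
  pn4 : ∀ a b, S a b → T.labelNat a = T.labelNat b
  /-- PN5: if `(a,b) ∈ S` and `a < b` then `d(a) = d(b) + 1`. -/
  pn5 : ∀ a b, S a b → T.lt a b → T.dpth a = T.dpth b + 1
  /-- PN6: if `a O* c`, `H(c) = b`, `a ∈ pr₁(S)` and `a < S(b) < b`, then there is a
  `d` with `S(a) O* d` and `H(d) = b`. -/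
  pn6 : ∀ a c b a' b', T.isVertex a → c <+: a → T.H c = b → S a a' → S b b' →
      T.lt a b' → T.lt b' b → ∃ d, d <+: a' ∧ T.H d = b
  /-- PN7: `S` is nonempty. -/
  pn7 : ∃ a b, S a b
  /-- PN8: `pr₁(S) = W ∩ U`. -/
  pn8 : ∀ a, (∃ b, S a b) ↔ (T.isLeaf a ∧ U a)
  /-- PN9: if `a O b` and `b ∉ U` then `a ∉ U`. -/
  pn9 : ∀ a b, T.Orel a b → ¬ U b → ¬ U a
  /-- PN10: if `a O b`, `a ∉ U` and `or(a,b) ≠ 2` then `b ∉ U`. -/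
  pn10 : ∀ b k, T.isVertex (b ++ [k]) → ¬ U (b ++ [k]) → T.arcLab b k ≠ 2 → ¬ U b
  /-- PN11: if `a O b` and `d(b)` is even then `or(a,b) ≠ 2`. -/
  pn11 : ∀ b k, T.isVertex (b ++ [k]) → Even (T.dpth b) → T.arcLab b k ≠ 2

/-- Property D1: if `a ≤ b ≤ c`, `a O* v` and `c O* v`, then `b O* v`
(`x O* y` meaning that `y` is a prefix of the path `x`). -/
theorem stmt10 (A : Tp) (a b c v : List ℕ)
    (ha : A.isVertex a) (hb : A.isVertex b) (hc : A.isVertex c) (hv : A.isVertex v)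
    (hab : A.le a b) (hbc : A.le b c) (hav : v <+: a) (hcv : v <+: c) :
    v <+: b := by
  induction A generalizing a b c v with
  | pr i =>
    match a, ha with
    | [], _ =>
      have hv0 : v = [] := List.prefix_nil.mp hav
      simp [hv0]
    | _ :: _, h => simp [Tp.isVertex] at h
  | bang A ih =>
    match v, hv with
    | [], _ => exact List.nil_prefix
    | 0 :: v', hv' =>
      obtain ⟨ta, rfl⟩ := hav
      obtain ⟨tc, rfl⟩ := hcv
      match b, hb with
      | [], _ =>
        rcases hab with h | h
        · simp [Tp.lt] at h
        · simp at h
      | 0 :: b', hb' =>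
        have h1 : A.le (v' ++ ta) b' := by
          rcases hab with h | h
          · exact Or.inl (by simpa [Tp.lt] using h)
          · exact Or.inr (by simpa using h)
        have h2 : A.le b' (v' ++ tc) := by
          rcases hbc with h | h
          · exact Or.inl (by simpa [Tp.lt] using h)
          · exact Or.inr (by simpa using h)
        have := ih (v' ++ ta) b' (v' ++ tc) v'
          (by simpa [Tp.isVertex] using ha) hb' (by simpa [Tp.isVertex] using hc) hv'
          h1 h2 (List.prefix_append _ _) (List.prefix_append _ _)
        exact List.cons_prefix_cons.mpr ⟨rfl, this⟩
    | (_ + 1) :: _, hv' => simp [Tp.isVertex] at hv'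
  | div A B ihA ihB =>
    match v, hv with
    | [], _ => exact List.nil_prefix
    | 0 :: v', hv' =>
      obtain ⟨ta, rfl⟩ := hav
      obtain ⟨tc, rfl⟩ := hcv
      match b, hb with
      | [], _ =>
        rcases hbc with h | h
        · simp [Tp.lt] at h
        · simp at h
      | 1 :: b', _ =>
        rcases hbc with h | h
        · simp [Tp.lt] at h
        · simp at h
      | 0 :: b', hb' =>
        have h1 : A.le b' (v' ++ ta) := by
          rcases hab with h | h
          · exact Or.inl (by simpa [Tp.lt] using h)
          · exact Or.inr (by simpa using h.symm)
        have h2 : A.le (v' ++ tc) b' := by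
          rcases hbc with h | h
          · exact Or.inl (by simpa [Tp.lt] using h)
          · exact Or.inr (by simpa using h.symm)
        have := ihA (v' ++ tc) b' (v' ++ ta) v'
          (by simpa [Tp.isVertex] using hc) hb' (by simpa [Tp.isVertex] using ha) hv'
          h2 h1 (List.prefix_append _ _) (List.prefix_append _ _)
        exact List.cons_prefix_cons.mpr ⟨rfl, this⟩
    | 1 :: v', hv' =>
      obtain ⟨ta, rfl⟩ := hav
      obtain ⟨tc, rfl⟩ := hcv
      match b, hb with
      | [], _ =>
        rcases hab with h | h
        · simp [Tp.lt] at h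
        · simp at h
      | 0 :: b', _ =>
        rcases hab with h | h
        · simp [Tp.lt] at h
        · simp at h
      | 1 :: b', hb' =>
        have h1 : B.le (v' ++ ta) b' := by
          rcases hab with h | h
          · exact Or.inl (by simpa [Tp.lt] using h)
          · exact Or.inr (by simpa using h)
        have h2 : B.le b' (v' ++ tc) := by
          rcases hbc with h | h
          · exact Or.inl (by simpa [Tp.lt] using h)
          · exact Or.inr (by simpa using h)
        have := ihB (v' ++ ta) b' (v' ++ tc) v'
          (by simpa [Tp.isVertex] using ha) hb' (by simpa [Tp.isVertex] using hc) hv'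
          h1 h2 (List.prefix_append _ _) (List.prefix_append _ _)
        exact List.cons_prefix_cons.mpr ⟨rfl, this⟩
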